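/- For $i \ge 1$ set $z_i = -\dfrac{u^{p^i}\, \varphi^{i+1}(\lambda)}{p \prod_{j=1}^{i} \varphi^j(E(u))^{h-1}}$ with $E(u) = u - p$, $\varphi(u) = u^p$, and $\lambda = \prod_{n\ge0}(1 - u^{p^n}/p)$. Then $v_p(z_i|_{u=p}) \ge p^i - i(h-1) - 1$, and for $0 < n < p - 1$, $v_p\big(\tfrac{d^n z_i}{du^n}\big|_{u=p}\big) \ge p^i + \min(i,p) - n - i(h-1) - 1$. -/

import Mathlib

/-- The function `z_i = -(u^{p^i} · φ^{i+1}(λ)) / (p · ∏_{j=1}^i φ^j(E(u))^{h-1})`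
on `ℚ_p`, where `E(u) = u - p`, `φ(u) = u^p`, `λ = ∏_{n≥0}(1 - u^{p^n}/p)`,
so `φ^{i+1}(λ)(u) = ∏_{n ≥ i+1}(1 - u^{p^n}/p)` and `φ^j(E(u)) = u^{p^j} - p`. -/
noncomputable def zI (p : ℕ) [Fact p.Prime] (h i : ℕ) : ℚ_[p] → ℚ_[p] :=
  fun u => -(u ^ (p ^ i) * (∏' n : ℕ, (1 - u ^ (p ^ (n + i + 1)) / (p : ℚ_[p])))) /
    ((p : ℚ_[p]) * ∏ j ∈ Finset.Icc 1 i, (u ^ (p ^ j) - (p : ℚ_[p])) ^ (h - 1))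

open PowerSeries Finset Filter Topology

namespace Stmt6Aux

variable {p : ℕ} [hp : Fact p.Prime]

local notation "K" => ℚ_[p]

lemma p1R : (1:ℝ) < (p:ℝ) := by exact_mod_cast hp.out.one_lt

lemma ppos : (0:ℝ) < (p:ℝ) := lt_trans one_pos p1R

lemma zpow_mono {a b : ℤ} (hab : a ≤ b) : (p:ℝ)^a ≤ (p:ℝ)^b :=
  zpow_le_zpow_right₀ (le_of_lt p1R) hab

lemma zpow_pos' (a : ℤ) : (0:ℝ) < (p:ℝ)^a := zpow_pos ppos a

/-- ‖p^m‖ = p^{-m} -/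
lemma norm_pi_pow (m : ℕ) : ‖((p:K))^m‖ = (p:ℝ)^(-(m:ℤ)) := by
  simpa using Padic.norm_p_zpow (m : ℤ)

/-- norm of natural number is ≤ 1 -/
lemma norm_nat_le_one (m : ℕ) : ‖((m:ℤ):K)‖ ≤ 1 := Padic.norm_int_le_one m

lemma norm_nat_le_one' (m : ℕ) : ‖((m:K))‖ ≤ 1 := by
  simpa using norm_nat_le_one (p := p) m

lemma norm_nat_eq_one (m : ℕ) (h1 : 1 ≤ m) (h2 : m < p) : ‖((m:K))‖ = 1 := by
  have hnd : ¬ ((p:ℤ) ∣ (m:ℤ)) := by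
    rw [Int.natCast_dvd_natCast]
    intro hd
    exact absurd (Nat.le_of_dvd h1 hd) (not_le.mpr h2)
  have := (Padic.norm_intCast_lt_one_iff (k := (m:ℤ))).not.mpr hnd
  have hle := norm_nat_le_one (p := p) m
  push_cast at this hle ⊢
  linarith [lt_or_ge (‖(m:K)‖) 1, this, hle]

/-- the binomial coefficient `C(p^j, k)` has norm ≤ p^{-j} for 1 ≤ k < p -/
lemma norm_choose_le (j k : ℕ) (hk1 : 1 ≤ k) (hkp : k < p) :
    ‖(((p^j).choose k : ℕ) : K)‖ ≤ (p:ℝ)^(-(j:ℤ)) := by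
  have hid : p^j * (p^j - 1).choose (k-1) = (p^j).choose k * k := by
    have := Nat.add_one_mul_choose_eq (p^j - 1) (k-1)
    have h1 : p^j - 1 + 1 = p^j := Nat.sub_add_cancel (Nat.one_le_pow _ _ hp.out.pos)
    have h2 : k - 1 + 1 = k := Nat.sub_add_cancel hk1
    rwa [h1, h2] at this
  have hidK : ((p:K))^j * ((p^j - 1).choose (k-1) : K) = ((p^j).choose k : K) * (k : K) := by
    exact_mod_cast congrArg (Nat.cast : ℕ → K) hid
  have hnk : ‖(k:K)‖ = 1 := norm_nat_eq_one k hk1 hkp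
  have := congrArg (‖·‖) hidK
  simp only [norm_mul, hnk, mul_one, norm_pi_pow] at this
  rw [← this]
  calc (p:ℝ)^(-(j:ℤ)) * ‖((p^j - 1).choose (k-1) : K)‖
      ≤ (p:ℝ)^(-(j:ℤ)) * 1 := by
        exact mul_le_mul_of_nonneg_left (norm_nat_le_one' _) (le_of_lt (zpow_pos' _))
    _ = (p:ℝ)^(-(j:ℤ)) := mul_one _

/-- The key predicate: all coefficients bounded by `c·p^k` (Gauss norm on disc of radius 1/p),
and low-degree coefficients (1 ≤ k ≤ p-2) additionally gain `p^{-g}`. -/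
def Nice (p : ℕ) [Fact p.Prime] (g : ℕ) (f : PowerSeries ℚ_[p]) (c : ℝ) : Prop :=
  (∀ k : ℕ, ‖PowerSeries.coeff (R := ℚ_[p]) k f‖ ≤ c * (p:ℝ)^(k:ℤ)) ∧
  (∀ k : ℕ, 1 ≤ k → k ≤ p - 2 → ‖PowerSeries.coeff (R := ℚ_[p]) k f‖ ≤ c * (p:ℝ)^((k:ℤ) - (g:ℤ)))

namespace Nice

variable {g : ℕ} {f f' : PowerSeries ℚ_[p]} {c c' : ℝ}

lemma nonneg (hf : Nice p g f c) : 0 ≤ c := by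
  have := hf.1 0
  simp at this
  exact le_trans (norm_nonneg _) this

lemma one : Nice p g (1 : PowerSeries ℚ_[p]) 1 := by
  constructor
  · intro k
    rw [PowerSeries.coeff_one]
    by_cases hk : k = 0
    · simp [hk]
    · rw [if_neg hk]
      simp only [norm_zero, one_mul]
      positivity
  · intro k hk1 _
    rw [PowerSeries.coeff_one, if_neg (by omega)]
    simp only [norm_zero, one_mul]
    positivity

lemma mul (hf : Nice p g f c) (hf' : Nice p g f' c') : Nice p g (f * f') (c * c') := by
  have hc := hf.nonneg
  have hc' := hf'.nonneg
  constructor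
  · intro k
    rw [PowerSeries.coeff_mul]
    apply IsUltrametricDist.norm_sum_le_of_forall_le_of_nonneg (by positivity)
    rintro ⟨a, b⟩ hab
    rw [Finset.HasAntidiagonal.mem_antidiagonal] at hab
    rw [norm_mul]
    calc ‖(PowerSeries.coeff (R := ℚ_[p]) a) f‖ * ‖(PowerSeries.coeff (R := ℚ_[p]) b) f'‖
        ≤ (c * (p:ℝ)^(a:ℤ)) * (c' * (p:ℝ)^(b:ℤ)) := by
          apply mul_le_mul (hf.1 a) (hf'.1 b) (norm_nonneg _) (by positivity)
      _ = c * c' * (p:ℝ)^((a:ℤ)+(b:ℤ)) := by rw [zpow_add₀ (ne_of_gt ppos)]; ring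
      _ = c * c' * (p:ℝ)^(k:ℤ) := by rw [← hab]; push_cast; ring_nf
  · intro k hk1 hk2
    rw [PowerSeries.coeff_mul]
    apply IsUltrametricDist.norm_sum_le_of_forall_le_of_nonneg (by positivity)
    rintro ⟨a, b⟩ hab
    rw [Finset.HasAntidiagonal.mem_antidiagonal] at hab
    rw [norm_mul]
    rcases Nat.eq_zero_or_pos a with ha | ha
    · subst ha
      have hb' : b = k := by omega
      rw [← hb'] at hk1 hk2 ⊢
      calc ‖(PowerSeries.coeff (R := ℚ_[p]) (0,b).1) f‖ * ‖(PowerSeries.coeff (R := ℚ_[p]) (0,b).2) f'‖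
          ≤ c * (c' * (p:ℝ)^((b:ℤ) - (g:ℤ))) := by
            apply mul_le_mul (by simpa using hf.1 0) (hf'.2 b hk1 hk2) (norm_nonneg _) hc
        _ = c * c' * (p:ℝ)^((b:ℤ) - (g:ℤ)) := by ring
    · rcases Nat.eq_zero_or_pos b with hb | hb
      · subst hb
        have ha' : a = k := by omega
        rw [← ha'] at hk1 hk2 ⊢
        calc ‖(PowerSeries.coeff (R := ℚ_[p]) (a,0).1) f‖ * ‖(PowerSeries.coeff (R := ℚ_[p]) (a,0).2) f'‖
            ≤ (c * (p:ℝ)^((a:ℤ) - (g:ℤ))) * c' := by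
              apply mul_le_mul (hf.2 a hk1 hk2) (by simpa using hf'.1 0) (norm_nonneg _)
                (by positivity)
          _ = c * c' * (p:ℝ)^((a:ℤ) - (g:ℤ)) := by ring
      · have ha2 : a ≤ p - 2 := by omega
        have hb2 : b ≤ p - 2 := by omega
        calc ‖(PowerSeries.coeff (R := ℚ_[p]) a) f‖ * ‖(PowerSeries.coeff (R := ℚ_[p]) b) f'‖
            ≤ (c * (p:ℝ)^((a:ℤ) - (g:ℤ))) * (c' * (p:ℝ)^((b:ℤ) - (g:ℤ))) := by
              apply mul_le_mul (hf.2 a ha ha2) (hf'.2 b hb hb2) (norm_nonneg _) (by positivity)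
          _ = c * c' * (p:ℝ)^((a:ℤ) + (b:ℤ) - 2*(g:ℤ)) := by
              rw [show (a:ℤ) + (b:ℤ) - 2*(g:ℤ) = ((a:ℤ) - g) + ((b:ℤ) - g) by ring,
                zpow_add₀ (ne_of_gt ppos)]; ring
          _ ≤ c * c' * (p:ℝ)^((k:ℤ) - (g:ℤ)) := by
              apply mul_le_mul_of_nonneg_left (zpow_mono ?_) (by positivity)
              have : (a:ℤ) + (b:ℤ) = (k:ℤ) := by exact_mod_cast congrArg (Nat.cast : ℕ → ℤ) hab
              omega

lemma prod {ι : Type*} (s : Finset ι) (F : ι → PowerSeries ℚ_[p]) (C : ι → ℝ)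
    (hF : ∀ j ∈ s, Nice p g (F j) (C j)) : Nice p g (∏ j ∈ s, F j) (∏ j ∈ s, C j) := by
  induction s using Finset.cons_induction with
  | empty => simpa using Nice.one
  | cons a s ha ih =>
    rw [Finset.prod_cons, Finset.prod_cons]
    exact (hF a (Finset.mem_cons_self a s)).mul
      (ih (fun j hj => hF j (Finset.mem_cons_of_mem hj)))

lemma pow (hf : Nice p g f c) (m : ℕ) : Nice p g (f ^ m) (c ^ m) := by
  induction m with
  | zero => simpa using Nice.one
  | succ m ih => rw [pow_succ, pow_succ]; exact ih.mul hf

lemma mono (hf : Nice p g f c) (hcc : c ≤ c') : Nice p g f c' := by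
  refine ⟨fun k => le_trans (hf.1 k) ?_, fun k h1 h2 => le_trans (hf.2 k h1 h2) ?_⟩ <;>
    exact mul_le_mul_of_nonneg_right hcc (le_of_lt (zpow_pos' _))

end Nice

/-! ### Chunk 2: concrete series -/

lemma norm_sub_eq_right {a b : K} (hab : ‖a‖ < ‖b‖) : ‖a - b‖ = ‖b‖ := by
  apply le_antisymm
  · calc ‖a - b‖ ≤ max ‖a‖ ‖b‖ := by
          simpa [sub_eq_add_neg] using Padic.nonarchimedean a (-b)
      _ = ‖b‖ := max_eq_right (le_of_lt hab)
  · by_contra hlt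
    push_neg at hlt
    have : ‖b‖ ≤ max ‖a - b‖ ‖a‖ := by
      calc ‖b‖ = ‖-(a - b) + a‖ := by ring_nf
        _ ≤ max ‖-(a - b)‖ ‖a‖ := Padic.nonarchimedean _ _
        _ = max ‖a - b‖ ‖a‖ := by rw [norm_neg]
    rcases max_cases (‖a - b‖) (‖a‖) with ⟨he, _⟩ | ⟨he, _⟩ <;> rw [he] at this <;> linarith

lemma coeff_XC_pow (N k : ℕ) :
    PowerSeries.coeff (R := ℚ_[p]) k (((Polynomial.X + Polynomial.C ((p:K)))^N : Polynomial K) :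
      PowerSeries K) = ((p:K))^(N-k) * ((N.choose k : ℕ) : K) := by
  rw [Polynomial.coeff_coe, Polynomial.coeff_X_add_C_pow]

lemma norm_coeff_XC_pow_le (N k : ℕ) (hN : 1 ≤ N) :
    ‖PowerSeries.coeff (R := ℚ_[p]) k (((Polynomial.X + Polynomial.C ((p:K)))^N : Polynomial K) :
      PowerSeries K)‖ ≤ (p:ℝ)^((k:ℤ)-(N:ℤ)) := by
  rw [coeff_XC_pow]
  rcases le_or_gt k N with hkN | hkN
  · rw [norm_mul, norm_pi_pow]
    calc (p:ℝ)^(-((N-k:ℕ):ℤ)) * ‖((N.choose k : ℕ):K)‖ ≤ (p:ℝ)^(-((N-k:ℕ):ℤ)) * 1 :=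
        mul_le_mul_of_nonneg_left (norm_nat_le_one' _) (le_of_lt (zpow_pos' _))
      _ = (p:ℝ)^((k:ℤ)-(N:ℤ)) := by
        rw [mul_one]; congr 1; rw [Nat.cast_sub hkN]; ring
  · rw [Nat.choose_eq_zero_of_lt hkN]
    simp only [Nat.cast_zero, mul_zero, norm_zero]
    positivity

section Main
variable (g : ℕ)

/-- improved bound for low-degree coefficients, using the `p`-divisibility of `C(p^j, k)`. -/
lemma norm_coeff_XC_pow_low (j k : ℕ) (hj : 1 ≤ j) (hk1 : 1 ≤ k) (hkp : k < p) :
    ‖PowerSeries.coeff (R := ℚ_[p]) k (((Polynomial.X + Polynomial.C ((p:K)))^(p^j) : Polynomial K) :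
      PowerSeries K)‖ ≤ (p:ℝ)^((k:ℤ)-((p^j:ℕ):ℤ)-(j:ℤ)) := by
  rw [coeff_XC_pow]
  have hkN : k ≤ p^j := le_trans (le_of_lt hkp) (Nat.le_self_pow (by omega) p)
  rw [norm_mul, norm_pi_pow]
  calc (p:ℝ)^(-((p^j-k:ℕ):ℤ)) * ‖(((p^j).choose k : ℕ):K)‖
      ≤ (p:ℝ)^(-((p^j-k:ℕ):ℤ)) * (p:ℝ)^(-(j:ℤ)) :=
        mul_le_mul_of_nonneg_left (norm_choose_le j k hk1 hkp) (le_of_lt (zpow_pos' _))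
    _ = (p:ℝ)^((k:ℤ)-((p^j:ℕ):ℤ)-(j:ℤ)) := by
        rw [← zpow_add₀ (ne_of_gt ppos)]; congr 1; rw [Nat.cast_sub hkN]; push_cast; ring

/-- `A := -(1/p)·(X+p)^{p^i}` -/
noncomputable def Aser (p : ℕ) [Fact p.Prime] (i : ℕ) : PowerSeries ℚ_[p] :=
  - (PowerSeries.C (R := ℚ_[p]) ((p:ℚ_[p]))⁻¹ *
    (((Polynomial.X + Polynomial.C ((p:ℚ_[p])))^(p^i) : Polynomial ℚ_[p]) : PowerSeries ℚ_[p]))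

lemma nice_A (i : ℕ) (hi1 : 1 ≤ i) (hgi : g ≤ i) :
    Nice p g (Aser p i) ((p:ℝ)^(1-((p^i:ℕ):ℤ))) := by
  have hnormC : ‖((p:K))⁻¹‖ = (p:ℝ)^(1:ℤ) := by
    rw [norm_inv, Padic.norm_p]; simp
  constructor
  · intro k
    rw [Aser, map_neg, norm_neg, PowerSeries.coeff_C_mul, norm_mul, hnormC]
    calc (p:ℝ)^(1:ℤ) * ‖PowerSeries.coeff (R := ℚ_[p]) k _‖
        ≤ (p:ℝ)^(1:ℤ) * (p:ℝ)^((k:ℤ)-((p^i:ℕ):ℤ)) :=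
          mul_le_mul_of_nonneg_left (norm_coeff_XC_pow_le _ k (Nat.one_le_pow i p hp.out.pos)) (le_of_lt (zpow_pos' _))
      _ = (p:ℝ)^(1-((p^i:ℕ):ℤ)) * (p:ℝ)^(k:ℤ) := by
          rw [← zpow_add₀ (ne_of_gt ppos), ← zpow_add₀ (ne_of_gt ppos)]; congr 1; omega
  · intro k hk1 hk2
    have hkp : k < p := by have := hp.out.two_le; omega
    rw [Aser, map_neg, norm_neg, PowerSeries.coeff_C_mul, norm_mul, hnormC]
    calc (p:ℝ)^(1:ℤ) * ‖PowerSeries.coeff (R := ℚ_[p]) k _‖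
        ≤ (p:ℝ)^(1:ℤ) * (p:ℝ)^((k:ℤ)-((p^i:ℕ):ℤ)-(i:ℤ)) :=
          mul_le_mul_of_nonneg_left (norm_coeff_XC_pow_low i k hi1 hk1 hkp) (le_of_lt (zpow_pos' _))
      _ ≤ (p:ℝ)^(1-((p^i:ℕ):ℤ)) * (p:ℝ)^((k:ℤ)-(g:ℤ)) := by
          rw [← zpow_add₀ (ne_of_gt ppos), ← zpow_add₀ (ne_of_gt ppos)]
          apply zpow_mono
          have hgi' : (g:ℤ) ≤ (i:ℤ) := by exact_mod_cast hgi
          linarith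

/-- `GF j := (X+p)^{p^j} - p` -/
noncomputable def GFser (p : ℕ) [Fact p.Prime] (j : ℕ) : PowerSeries ℚ_[p] :=
  (((Polynomial.X + Polynomial.C ((p:ℚ_[p])))^(p^j) : Polynomial ℚ_[p]) : PowerSeries ℚ_[p])
    - PowerSeries.C (R := ℚ_[p]) ((p:ℚ_[p]))

lemma coeff_GF_zero (j : ℕ) :
    PowerSeries.coeff (R := ℚ_[p]) 0 (GFser p j) = ((p:K))^(p^j) - (p:K) := by
  rw [GFser, map_sub, coeff_XC_pow, PowerSeries.coeff_zero_C]
  simp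

lemma norm_GF_zero (j : ℕ) (hj : 1 ≤ j) : ‖PowerSeries.coeff (R := ℚ_[p]) 0 (GFser p j)‖ = (p:ℝ)^(-1:ℤ) := by
  rw [coeff_GF_zero]
  have h1 : ‖((p:K))^(p^j)‖ < ‖(p:K)‖ := by
    rw [norm_pi_pow, Padic.norm_p, ← zpow_neg_one]
    apply zpow_lt_zpow_right₀ p1R
    have : 2 ≤ p^j := le_trans hp.out.two_le (Nat.le_self_pow (by omega) p)
    omega
  rw [norm_sub_eq_right h1, Padic.norm_p, zpow_neg_one]

lemma nice_GF (j : ℕ) (hj : 1 ≤ j) (hgp : g ≤ p) :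
    Nice p g (GFser p j) ((p:ℝ)^(-1:ℤ)) := by
  have h2pj : 2 ≤ p^j := le_trans hp.out.two_le (Nat.le_self_pow (by omega) p)
  constructor
  · intro k
    rcases Nat.eq_zero_or_pos k with rfl | hk
    · rw [norm_GF_zero j hj]; simp
    · rw [GFser, map_sub, PowerSeries.coeff_C, if_neg (by omega), sub_zero]
      calc ‖PowerSeries.coeff (R := ℚ_[p]) k _‖ ≤ (p:ℝ)^((k:ℤ)-((p^j:ℕ):ℤ)) :=
            norm_coeff_XC_pow_le _ k (by omega)
        _ ≤ (p:ℝ)^(-1:ℤ) * (p:ℝ)^(k:ℤ) := by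
            rw [← zpow_add₀ (ne_of_gt ppos)]; apply zpow_mono
            have h2 : (2:ℤ) ≤ ((p^j:ℕ):ℤ) := by exact_mod_cast h2pj
            linarith
  · intro k hk1 hk2
    have hkp : k < p := by have := hp.out.two_le; omega
    rw [GFser, map_sub, PowerSeries.coeff_C, if_neg (by omega), sub_zero]
    calc ‖PowerSeries.coeff (R := ℚ_[p]) k _‖ ≤ (p:ℝ)^((k:ℤ)-((p^j:ℕ):ℤ)-(j:ℤ)) :=
          norm_coeff_XC_pow_low j k hj hk1 hkp
      _ ≤ (p:ℝ)^(-1:ℤ) * (p:ℝ)^((k:ℤ)-(g:ℤ)) := by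
          rw [← zpow_add₀ (ne_of_gt ppos)]
          apply zpow_mono
          have e1 : (g:ℤ) ≤ (p:ℤ) := by exact_mod_cast hgp
          have h1 : (1:ℤ) ≤ (j:ℤ) := by exact_mod_cast hj
          have h2 : (p:ℤ) ≤ ((p^j:ℕ):ℤ) := by exact_mod_cast Nat.le_self_pow (by omega) p
          linarith

/-- `G := ∏_{j=1}^{i} GF_j^{h-1}` -/
noncomputable def Gser (p : ℕ) [Fact p.Prime] (h i : ℕ) : PowerSeries ℚ_[p] :=
  ∏ j ∈ Finset.Icc 1 i, (GFser p j)^(h-1)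

lemma nice_G (h i : ℕ) (hgp : g ≤ p) :
    Nice p g (Gser p h i) ((p:ℝ)^(-((i*(h-1):ℕ):ℤ))) := by
  have hcard : (Finset.Icc 1 i).card = i := by rw [Nat.card_Icc]; omega
  have : ((p:ℝ)^(-((i*(h-1):ℕ):ℤ))) = ∏ _j ∈ Finset.Icc 1 i, ((p:ℝ)^(-1:ℤ))^(h-1) := by
    rw [Finset.prod_const, hcard, ← zpow_natCast (((p:ℝ)^(-1:ℤ))^(h-1)),
      ← zpow_natCast ((p:ℝ)^(-1:ℤ)), ← zpow_mul, ← zpow_mul]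
    congr 1
    push_cast
    ring
  rw [this, Gser]
  apply Nice.prod
  intro j hj
  rw [Finset.mem_Icc] at hj
  exact (nice_GF g j hj.1 hgp).pow (h-1)

lemma norm_G_zero (h i : ℕ) :
    ‖PowerSeries.constantCoeff (R := ℚ_[p]) (Gser p h i)‖ = (p:ℝ)^(-((i*(h-1):ℕ):ℤ)) := by
  have hcard : (Finset.Icc 1 i).card = i := by rw [Nat.card_Icc]; omega
  rw [Gser, map_prod, norm_prod]
  have heach : ∀ j ∈ Finset.Icc 1 i, ‖PowerSeries.constantCoeff (R := ℚ_[p]) ((GFser p j)^(h-1))‖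
      = ((p:ℝ)^(-1:ℤ))^(h-1) := by
    intro j hj
    rw [Finset.mem_Icc] at hj
    rw [map_pow, norm_pow]
    congr 1
    have := norm_GF_zero (p := p) j hj.1
    rwa [PowerSeries.coeff_zero_eq_constantCoeff_apply] at this
  rw [Finset.prod_congr rfl heach, Finset.prod_const, hcard,
    ← zpow_natCast (((p:ℝ)^(-1:ℤ))^(h-1)), ← zpow_natCast ((p:ℝ)^(-1:ℤ)), ← zpow_mul, ← zpow_mul]
  congr 1
  push_cast
  ring

lemma G_zero_ne (h i : ℕ) : PowerSeries.constantCoeff (R := ℚ_[p]) (Gser p h i) ≠ 0 := by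
  intro hz
  have := norm_G_zero (p := p) h i
  rw [hz, norm_zero] at this
  exact absurd this.symm (ne_of_gt (zpow_pos' _))

/-- inverse of a `Nice` series whose constant coefficient has norm exactly `c > 0`. -/
lemma nice_inv (f : PowerSeries ℚ_[p]) (c : ℝ) (hcpos : 0 < c) (hf : Nice p g f c)
    (h0 : ‖PowerSeries.constantCoeff (R := ℚ_[p]) f‖ = c) :
    Nice p g f⁻¹ c⁻¹ := by
  have hinv0 : ‖(PowerSeries.constantCoeff (R := ℚ_[p]) f)⁻¹‖ = c⁻¹ := by rw [norm_inv, h0]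
  have hcinv : (0:ℝ) < c⁻¹ := by positivity
  -- cap bound
  have cap : ∀ n : ℕ, ‖PowerSeries.coeff (R := ℚ_[p]) n f⁻¹‖ ≤ c⁻¹ * (p:ℝ)^(n:ℤ) := by
    intro n
    induction n using Nat.strong_induction_on with
    | _ n ih =>
      rw [PowerSeries.coeff_inv]
      by_cases hn : n = 0
      · subst hn
        rw [if_pos rfl, hinv0]
        simp
      · rw [if_neg hn, norm_mul, norm_neg, hinv0]
        have hS : ‖∑ x ∈ Finset.HasAntidiagonal.antidiagonal n,
            if x.2 < n then PowerSeries.coeff (R := ℚ_[p]) x.1 f *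
              PowerSeries.coeff (R := ℚ_[p]) x.2 f⁻¹ else 0‖ ≤ c * (c⁻¹ * (p:ℝ)^(n:ℤ)) := by
          apply IsUltrametricDist.norm_sum_le_of_forall_le_of_nonneg
          · exact le_of_lt (mul_pos hcpos (mul_pos hcinv (zpow_pos' _)))
          rintro ⟨a, b⟩ hab
          rw [Finset.HasAntidiagonal.mem_antidiagonal] at hab
          by_cases hbn : b < n
          · rw [if_pos hbn, norm_mul]
            have hcast : (a:ℤ) + (b:ℤ) = (n:ℤ) := by exact_mod_cast congrArg (Nat.cast : ℕ → ℤ) hab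
            calc ‖PowerSeries.coeff (R := ℚ_[p]) a f‖ * ‖PowerSeries.coeff (R := ℚ_[p]) b f⁻¹‖
                ≤ (c * (p:ℝ)^(a:ℤ)) * (c⁻¹ * (p:ℝ)^(b:ℤ)) :=
                  mul_le_mul (hf.1 a) (ih b hbn) (norm_nonneg _)
                    (le_of_lt (mul_pos hcpos (zpow_pos' _)))
              _ = c * (c⁻¹ * (p:ℝ)^((a:ℤ)+(b:ℤ))) := by
                  rw [zpow_add₀ (ne_of_gt ppos)]; ring
              _ = c * (c⁻¹ * (p:ℝ)^(n:ℤ)) := by rw [hcast]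
          · rw [if_neg hbn, norm_zero]
            exact le_of_lt (mul_pos hcpos (mul_pos hcinv (zpow_pos' _)))
        calc c⁻¹ * ‖∑ x ∈ Finset.HasAntidiagonal.antidiagonal n,
              if x.2 < n then PowerSeries.coeff (R := ℚ_[p]) x.1 f *
                PowerSeries.coeff (R := ℚ_[p]) x.2 f⁻¹ else 0‖
            ≤ c⁻¹ * (c * (c⁻¹ * (p:ℝ)^(n:ℤ))) := mul_le_mul_of_nonneg_left hS (le_of_lt hcinv)
          _ = (c⁻¹ * c) * (c⁻¹ * (p:ℝ)^(n:ℤ)) := by ring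
          _ = c⁻¹ * (p:ℝ)^(n:ℤ) := by rw [inv_mul_cancel₀ (ne_of_gt hcpos), one_mul]
  refine ⟨cap, ?_⟩
  -- low-degree bound
  intro n
  induction n using Nat.strong_induction_on with
  | _ n ih =>
    intro hn1 hn2
    rw [PowerSeries.coeff_inv, if_neg (by omega), norm_mul, norm_neg, hinv0]
    have hS : ‖∑ x ∈ Finset.HasAntidiagonal.antidiagonal n,
        if x.2 < n then PowerSeries.coeff (R := ℚ_[p]) x.1 f *
          PowerSeries.coeff (R := ℚ_[p]) x.2 f⁻¹ else 0‖ ≤ c * (c⁻¹ * (p:ℝ)^((n:ℤ)-(g:ℤ))) := by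
      apply IsUltrametricDist.norm_sum_le_of_forall_le_of_nonneg
      · exact le_of_lt (mul_pos hcpos (mul_pos hcinv (zpow_pos' _)))
      rintro ⟨a, b⟩ hab
      rw [Finset.HasAntidiagonal.mem_antidiagonal] at hab
      by_cases hbn : b < n
      · rw [if_pos hbn, norm_mul]
        rcases Nat.eq_zero_or_pos b with rfl | hb1
        · have ha : a = n := by omega
          rw [ha]
          calc ‖PowerSeries.coeff (R := ℚ_[p]) n f‖ * ‖PowerSeries.coeff (R := ℚ_[p]) 0 f⁻¹‖
              ≤ (c * (p:ℝ)^((n:ℤ)-(g:ℤ))) * c⁻¹ :=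
                mul_le_mul (hf.2 n hn1 hn2) (by simpa using cap 0) (norm_nonneg _)
                  (le_of_lt (mul_pos hcpos (zpow_pos' _)))
            _ = c * (c⁻¹ * (p:ℝ)^((n:ℤ)-(g:ℤ))) := by ring
        · have ha1 : 1 ≤ a := by omega
          have ha2 : a ≤ p - 2 := by omega
          have hb2 : b ≤ p - 2 := by omega
          have hcast : (a:ℤ) + (b:ℤ) = (n:ℤ) := by exact_mod_cast congrArg (Nat.cast : ℕ → ℤ) hab
          calc ‖PowerSeries.coeff (R := ℚ_[p]) a f‖ * ‖PowerSeries.coeff (R := ℚ_[p]) b f⁻¹‖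
              ≤ (c * (p:ℝ)^((a:ℤ)-(g:ℤ))) * (c⁻¹ * (p:ℝ)^((b:ℤ)-(g:ℤ))) :=
                mul_le_mul (hf.2 a ha1 ha2) (ih b hbn hb1 hb2) (norm_nonneg _)
                  (le_of_lt (mul_pos hcpos (zpow_pos' _)))
            _ = c * (c⁻¹ * (p:ℝ)^(((a:ℤ)-(g:ℤ))+((b:ℤ)-(g:ℤ)))) := by
                rw [zpow_add₀ (ne_of_gt ppos)]; ring
            _ ≤ c * (c⁻¹ * (p:ℝ)^((n:ℤ)-(g:ℤ))) := by
                have hm := zpow_mono (p := p) (a := ((a:ℤ)-(g:ℤ))+((b:ℤ)-(g:ℤ))) (b := (n:ℤ)-(g:ℤ))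
                  (by omega)
                apply mul_le_mul_of_nonneg_left (mul_le_mul_of_nonneg_left hm (le_of_lt hcinv))
                  (le_of_lt hcpos)
      · rw [if_neg hbn, norm_zero]
        exact le_of_lt (mul_pos hcpos (mul_pos hcinv (zpow_pos' _)))
    calc c⁻¹ * ‖∑ x ∈ Finset.HasAntidiagonal.antidiagonal n,
          if x.2 < n then PowerSeries.coeff (R := ℚ_[p]) x.1 f *
            PowerSeries.coeff (R := ℚ_[p]) x.2 f⁻¹ else 0‖
        ≤ c⁻¹ * (c * (c⁻¹ * (p:ℝ)^((n:ℤ)-(g:ℤ)))) := mul_le_mul_of_nonneg_left hS (le_of_lt hcinv)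
      _ = (c⁻¹ * c) * (c⁻¹ * (p:ℝ)^((n:ℤ)-(g:ℤ))) := by ring
      _ = c⁻¹ * (p:ℝ)^((n:ℤ)-(g:ℤ)) := by rw [inv_mul_cancel₀ (ne_of_gt hcpos), one_mul]

lemma nice_Ginv (h i : ℕ) (hgp : g ≤ p) :
    Nice p g (Gser p h i)⁻¹ ((p:ℝ)^(((i*(h-1):ℕ):ℤ))) := by
  have := nice_inv g (Gser p h i) ((p:ℝ)^(-((i*(h-1):ℕ):ℤ))) (zpow_pos' _) (nice_G g h i hgp)
    (norm_G_zero h i)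
  rwa [← zpow_neg, neg_neg] at this

/-! ### Chunk 3: evaluation of power series on the disc `‖t‖ ≤ p⁻²` -/

/-- evaluation of a power series at a point (defined as a `tsum`). -/
noncomputable def ev (f : PowerSeries ℚ_[p]) (t : ℚ_[p]) : ℚ_[p] :=
  ∑' k : ℕ, PowerSeries.coeff (R := ℚ_[p]) k f * t^k

/-- cap condition -/
def Cap (p : ℕ) [Fact p.Prime] (f : PowerSeries ℚ_[p]) (c : ℝ) : Prop :=
  ∀ k : ℕ, ‖PowerSeries.coeff (R := ℚ_[p]) k f‖ ≤ c * (p:ℝ)^(k:ℤ)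

variable {t : ℚ_[p]} {f f' : PowerSeries ℚ_[p]} {c c' : ℝ}

lemma Cap.nonneg (hf : Cap p f c) : 0 ≤ c := by
  have := hf 0
  simp at this
  exact le_trans (norm_nonneg _) this

lemma cap_term_le (hf : Cap p f c) (ht : ‖t‖ ≤ (p:ℝ)^(-2:ℤ)) (k : ℕ) :
    ‖PowerSeries.coeff (R := ℚ_[p]) k f * t^k‖ ≤ c * ((p:ℝ)⁻¹)^k := by
  rw [norm_mul, norm_pow]
  calc ‖PowerSeries.coeff (R := ℚ_[p]) k f‖ * ‖t‖^k
      ≤ (c * (p:ℝ)^(k:ℤ)) * ((p:ℝ)^(-2:ℤ))^k := by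
        apply mul_le_mul (hf k) (pow_le_pow_left₀ (norm_nonneg _) ht k) (by positivity)
        have := hf.nonneg
        positivity
    _ = c * ((p:ℝ)⁻¹)^k := by
        rw [← zpow_natCast ((p:ℝ)^(-2:ℤ)), ← zpow_mul, ← zpow_natCast ((p:ℝ)⁻¹), ← zpow_neg_one,
          ← zpow_mul, mul_assoc, ← zpow_add₀ (ne_of_gt ppos)]
        congr 2
        ring

lemma cap_summable_norm (hf : Cap p f c) (ht : ‖t‖ ≤ (p:ℝ)^(-2:ℤ)) :
    Summable (fun k : ℕ => ‖PowerSeries.coeff (R := ℚ_[p]) k f * t^k‖) := by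
  apply Summable.of_nonneg_of_le (fun k => norm_nonneg _) (cap_term_le hf ht)
  apply Summable.mul_left
  apply summable_geometric_of_lt_one (by positivity)
  rw [inv_lt_one₀ ppos]
  exact p1R

lemma cap_summable (hf : Cap p f c) (ht : ‖t‖ ≤ (p:ℝ)^(-2:ℤ)) :
    Summable (fun k : ℕ => PowerSeries.coeff (R := ℚ_[p]) k f * t^k) :=
  (cap_summable_norm hf ht).of_norm

lemma ev_norm_le (hf : Cap p f c) (ht : ‖t‖ ≤ (p:ℝ)^(-2:ℤ)) : ‖ev f t‖ ≤ c := by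
  apply IsUltrametricDist.norm_tsum_le_of_forall_le_of_nonneg hf.nonneg
  intro k
  calc ‖PowerSeries.coeff (R := ℚ_[p]) k f * t^k‖ ≤ c * ((p:ℝ)⁻¹)^k := cap_term_le hf ht k
    _ ≤ c * 1 := by
        apply mul_le_mul_of_nonneg_left _ hf.nonneg
        apply pow_le_one₀ (by positivity)
        rw [inv_le_one₀ ppos]
        exact le_of_lt p1R
    _ = c := mul_one c

lemma ev_mul (hf : Cap p f c) (hf' : Cap p f' c') (ht : ‖t‖ ≤ (p:ℝ)^(-2:ℤ)) :
    ev (f * f') t = ev f t * ev f' t := by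
  rw [ev, ev, ev,
    tsum_mul_tsum_eq_tsum_sum_antidiagonal_of_summable_norm (cap_summable_norm hf ht)
      (cap_summable_norm hf' ht)]
  apply tsum_congr
  intro n
  rw [PowerSeries.coeff_mul, Finset.sum_mul]
  apply Finset.sum_congr rfl
  rintro ⟨a, b⟩ hab
  rw [Finset.HasAntidiagonal.mem_antidiagonal] at hab
  simp only
  rw [← hab, pow_add]
  ring

lemma ev_one (ht : ‖t‖ ≤ (p:ℝ)^(-2:ℤ)) : ev (1 : PowerSeries ℚ_[p]) t = 1 := by
  rw [ev, tsum_eq_single 0]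
  · simp
  · intro k hk
    rw [PowerSeries.coeff_one, if_neg hk, zero_mul]

lemma ev_zero_pt (f : PowerSeries ℚ_[p]) : ev f 0 = PowerSeries.coeff (R := ℚ_[p]) 0 f := by
  rw [ev, tsum_eq_single 0]
  · simp
  · intro k hk
    rw [zero_pow hk, mul_zero]

lemma ev_neg (f : PowerSeries ℚ_[p]) : ev (-f) t = - ev f t := by
  rw [ev, ev, ← tsum_neg]
  apply tsum_congr
  intro k
  rw [map_neg]
  ring

lemma ev_sub (hf : Cap p f c) (hf' : Cap p f' c') (ht : ‖t‖ ≤ (p:ℝ)^(-2:ℤ)) :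
    ev (f - f') t = ev f t - ev f' t := by
  rw [ev, ev, ev, ← Summable.tsum_sub (cap_summable hf ht) (cap_summable hf' ht)]
  apply tsum_congr
  intro k
  rw [map_sub]
  ring

lemma ev_C_mul (a : ℚ_[p]) (f : PowerSeries ℚ_[p]) :
    ev (PowerSeries.C (R := ℚ_[p]) a * f) t = a * ev f t := by
  rw [ev, ev, ← tsum_mul_left]
  apply tsum_congr
  intro k
  rw [PowerSeries.coeff_C_mul]
  ring

lemma ev_coe (P : Polynomial ℚ_[p]) : ev (P : PowerSeries ℚ_[p]) t = Polynomial.eval t P := by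
  rw [ev, tsum_eq_sum (s := Finset.range (P.natDegree + 1)), Polynomial.eval_eq_sum_range]
  · apply Finset.sum_congr rfl
    intro k _
    rw [Polynomial.coeff_coe]
  · intro k hk
    rw [Finset.mem_range, not_lt] at hk
    rw [Polynomial.coeff_coe, Polynomial.coeff_eq_zero_of_natDegree_lt (by omega), zero_mul]

lemma ev_pow {g : ℕ} (hf : Nice p g f c) (ht : ‖t‖ ≤ (p:ℝ)^(-2:ℤ)) (m : ℕ) :
    ev (f ^ m) t = (ev f t)^m := by
  induction m with
  | zero => simpa using ev_one ht
  | succ m ih =>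
    rw [pow_succ, pow_succ, ev_mul ((hf.pow m).1) (hf.1) ht, ih]

lemma ev_prod {g : ℕ} {ι : Type*} (s : Finset ι) (F : ι → PowerSeries ℚ_[p]) (C : ι → ℝ)
    (hF : ∀ j ∈ s, Nice p g (F j) (C j)) (ht : ‖t‖ ≤ (p:ℝ)^(-2:ℤ)) :
    ev (∏ j ∈ s, F j) t = ∏ j ∈ s, ev (F j) t := by
  induction s using Finset.cons_induction with
  | empty => simpa using ev_one ht
  | cons a s ha ih =>
    rw [Finset.prod_cons, Finset.prod_cons,
      ev_mul (hF a (Finset.mem_cons_self a s)).1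
        (Nice.prod _ F C (fun j hj => hF j (Finset.mem_cons_of_mem hj))).1 ht,
      ih (fun j hj => hF j (Finset.mem_cons_of_mem hj))]

/-! ### Chunk 4: the infinite-product factor as a power series -/

lemma Cap.mul (hf : Cap p f c) (hf' : Cap p f' c') : Cap p (f * f') (c * c') := by
  intro k
  rw [PowerSeries.coeff_mul]
  apply IsUltrametricDist.norm_sum_le_of_forall_le_of_nonneg
    (by have := hf.nonneg; have := hf'.nonneg; positivity)
  rintro ⟨a, b⟩ hab
  rw [Finset.HasAntidiagonal.mem_antidiagonal] at hab
  rw [norm_mul]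
  calc ‖(PowerSeries.coeff (R := ℚ_[p]) a) f‖ * ‖(PowerSeries.coeff (R := ℚ_[p]) b) f'‖
      ≤ (c * (p:ℝ)^(a:ℤ)) * (c' * (p:ℝ)^(b:ℤ)) :=
        mul_le_mul (hf a) (hf' b) (norm_nonneg _) (by have := hf.nonneg; positivity)
    _ = c * c' * (p:ℝ)^((a:ℤ)+(b:ℤ)) := by rw [zpow_add₀ (ne_of_gt ppos)]; ring
    _ = c * c' * (p:ℝ)^(k:ℤ) := by
        congr 2
        exact_mod_cast congrArg (Nat.cast : ℕ → ℤ) hab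

/-- the `m`-th factor of the infinite product, as a polynomial in `t = u - p` -/
noncomputable def Fpoly (p : ℕ) [Fact p.Prime] (i m : ℕ) : Polynomial ℚ_[p] :=
  1 - Polynomial.C ((p:ℚ_[p]))⁻¹ * (Polynomial.X + Polynomial.C ((p:ℚ_[p])))^(p^(m+i+1))

/-- partial products -/
noncomputable def PPser (p : ℕ) [Fact p.Prime] (i M : ℕ) : PowerSeries ℚ_[p] :=
  ∏ n ∈ Finset.range M, ((Fpoly p i n : Polynomial ℚ_[p]) : PowerSeries ℚ_[p])

/-- the limit power series (the tail product `∏_{n≥0} (1 - u^{p^{n+i+1}}/p)` at `u = p + t`) -/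
noncomputable def Lser (p : ℕ) [Fact p.Prime] (i : ℕ) : PowerSeries ℚ_[p] :=
  PowerSeries.mk fun k =>
    limUnder atTop fun M => PowerSeries.coeff (R := ℚ_[p]) k (PPser p i M)

lemma coeff_F (i m k : ℕ) :
    PowerSeries.coeff (R := ℚ_[p]) k ((Fpoly p i m : Polynomial ℚ_[p]) : PowerSeries ℚ_[p]) =
      (if k = 0 then 1 else 0) -
        ((p:ℚ_[p]))⁻¹ * (((p:ℚ_[p]))^(p^(m+i+1)-k) * (((p^(m+i+1)).choose k : ℕ) : ℚ_[p])) := by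
  rw [Polynomial.coeff_coe, Fpoly, Polynomial.coeff_sub, Polynomial.coeff_one,
    Polynomial.coeff_C_mul, Polynomial.coeff_X_add_C_pow]

lemma coeff_F_sub_one (i m k : ℕ) :
    PowerSeries.coeff (R := ℚ_[p]) k (((Fpoly p i m : Polynomial ℚ_[p]) : PowerSeries ℚ_[p]) - 1) =
      -(((p:ℚ_[p]))⁻¹ * (((p:ℚ_[p]))^(p^(m+i+1)-k) * (((p^(m+i+1)).choose k : ℕ) : ℚ_[p]))) := by
  rw [map_sub, coeff_F, PowerSeries.coeff_one]
  ring

lemma norm_F_term (N k : ℕ) :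
    ‖((p:ℚ_[p]))⁻¹ * (((p:ℚ_[p]))^(N-k) * ((N.choose k : ℕ) : ℚ_[p]))‖ ≤
      (p:ℝ)^((1:ℤ)+(k:ℤ)-(N:ℤ)) := by
  rcases le_or_gt k N with hk | hk
  · rw [norm_mul, norm_mul, norm_inv, Padic.norm_p, inv_inv, norm_pi_pow]
    have h1 : ‖((N.choose k : ℕ) : ℚ_[p])‖ ≤ 1 := norm_nat_le_one' _
    calc (p:ℝ) * ((p:ℝ)^(-((N-k:ℕ):ℤ)) * ‖((N.choose k : ℕ) : ℚ_[p])‖)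
        ≤ (p:ℝ) * ((p:ℝ)^(-((N-k:ℕ):ℤ)) * 1) := by
          apply mul_le_mul_of_nonneg_left _ (le_of_lt ppos)
          exact mul_le_mul_of_nonneg_left h1 (le_of_lt (zpow_pos' _))
      _ = (p:ℝ)^((1:ℤ)+(k:ℤ)-(N:ℤ)) := by
          rw [mul_one, Nat.cast_sub hk, mul_comm, ← zpow_add_one₀ (ne_of_gt ppos)]
          congr 1
          ring
  · rw [Nat.choose_eq_zero_of_lt hk]
    simp only [Nat.cast_zero, mul_zero, norm_zero]
    exact le_of_lt (zpow_pos' _)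

lemma NF_large (i m : ℕ) (hi1 : 1 ≤ i) : p + 1 ≤ p^(m+i+1) := by
  have h2 : 2 ≤ m + i + 1 := by omega
  calc p + 1 ≤ p * p := by nlinarith [hp.out.two_le]
    _ = p^2 := by ring
    _ ≤ p^(m+i+1) := Nat.pow_le_pow_right hp.out.pos h2

lemma cap_F_sub_one (i m : ℕ) :
    Cap p (((Fpoly p i m : Polynomial ℚ_[p]) : PowerSeries ℚ_[p]) - 1)
      ((p:ℝ)^((1:ℤ)-((p^(m+i+1):ℕ):ℤ))) := by
  intro k
  rw [coeff_F_sub_one, norm_neg]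
  calc ‖((p:ℚ_[p]))⁻¹ * (((p:ℚ_[p]))^(p^(m+i+1)-k) * (((p^(m+i+1)).choose k : ℕ) : ℚ_[p]))‖
      ≤ (p:ℝ)^((1:ℤ)+(k:ℤ)-((p^(m+i+1):ℕ):ℤ)) := norm_F_term _ k
    _ = (p:ℝ)^((1:ℤ)-((p^(m+i+1):ℕ):ℤ)) * (p:ℝ)^(k:ℤ) := by
        rw [← zpow_add₀ (ne_of_gt ppos)]
        congr 1
        ring

lemma nice_F (g i : ℕ) (hi1 : 1 ≤ i) (hgp : g ≤ p) (m : ℕ) :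
    Nice p g ((Fpoly p i m : Polynomial ℚ_[p]) : PowerSeries ℚ_[p]) 1 := by
  have hN := NF_large (p := p) i m hi1
  have hNZ : (p:ℤ) + 1 ≤ ((p^(m+i+1):ℕ):ℤ) := by exact_mod_cast hN
  have hgZ : (g:ℤ) ≤ (p:ℤ) := by exact_mod_cast hgp
  have hterm : ∀ k : ℕ, 1 ≤ k →
      ‖PowerSeries.coeff (R := ℚ_[p]) k ((Fpoly p i m : Polynomial ℚ_[p]) : PowerSeries ℚ_[p])‖ ≤
        (p:ℝ)^((1:ℤ)+(k:ℤ)-((p^(m+i+1):ℕ):ℤ)) := by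
    intro k hk
    rw [coeff_F, if_neg (by omega), zero_sub, norm_neg]
    exact norm_F_term _ k
  constructor
  · intro k
    rcases Nat.eq_zero_or_pos k with rfl | hk1
    · rw [coeff_F, if_pos rfl]
      have hx : ‖((p:ℚ_[p]))⁻¹ * (((p:ℚ_[p]))^(p^(m+i+1)-0) * (((p^(m+i+1)).choose 0 : ℕ) : ℚ_[p]))‖ ≤ 1 := by
        apply le_trans (norm_F_term _ 0)
        apply zpow_le_one_of_nonpos₀ (le_of_lt p1R)
        omega
      calc ‖(1:ℚ_[p]) - _‖ ≤ max ‖(1:ℚ_[p])‖ ‖-(((p:ℚ_[p]))⁻¹ * (((p:ℚ_[p]))^(p^(m+i+1)-0) * (((p^(m+i+1)).choose 0 : ℕ) : ℚ_[p])))‖ := by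
            simpa [sub_eq_add_neg] using Padic.nonarchimedean (1:ℚ_[p])
              (-(((p:ℚ_[p]))⁻¹ * (((p:ℚ_[p]))^(p^(m+i+1)-0) * (((p^(m+i+1)).choose 0 : ℕ) : ℚ_[p]))))
        _ ≤ 1 := by
            apply max_le (by simp)
            rwa [norm_neg]
        _ = 1 * (p:ℝ)^((0:ℕ):ℤ) := by simp
    · calc ‖PowerSeries.coeff (R := ℚ_[p]) k _‖ ≤ (p:ℝ)^((1:ℤ)+(k:ℤ)-((p^(m+i+1):ℕ):ℤ)) :=
            hterm k hk1
        _ ≤ 1 * (p:ℝ)^(k:ℤ) := by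
            rw [one_mul]
            apply zpow_mono
            omega
  · intro k hk1 _
    calc ‖PowerSeries.coeff (R := ℚ_[p]) k _‖ ≤ (p:ℝ)^((1:ℤ)+(k:ℤ)-((p^(m+i+1):ℕ):ℤ)) := hterm k hk1
      _ ≤ 1 * (p:ℝ)^((k:ℤ)-(g:ℤ)) := by
          rw [one_mul]
          apply zpow_mono
          omega

lemma nice_PP (g i : ℕ) (hi1 : 1 ≤ i) (hgp : g ≤ p) (M : ℕ) :
    Nice p g (PPser p i M) 1 := by
  have := Nice.prod (g := g) (Finset.range M)
    (fun n => ((Fpoly p i n : Polynomial ℚ_[p]) : PowerSeries ℚ_[p])) (fun _ => 1)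
    (fun n _ => nice_F g i hi1 hgp n)
  rwa [Finset.prod_const_one] at this

lemma PP_succ_sub (i M : ℕ) :
    PPser p i (M+1) - PPser p i M =
      PPser p i M * (((Fpoly p i M : Polynomial ℚ_[p]) : PowerSeries ℚ_[p]) - 1) := by
  rw [PPser, PPser, Finset.prod_range_succ]
  ring

lemma eps_le (i M : ℕ) : ((p:ℝ))^((1:ℤ)-((p^(M+i+1):ℕ):ℤ)) ≤ ((p:ℝ)⁻¹)^M := by
  have h1 : M + i + 1 < p^(M+i+1) := Nat.lt_pow_self hp.out.one_lt
  have h2 : (M:ℤ) + 1 ≤ ((p^(M+i+1):ℕ):ℤ) := by exact_mod_cast by omega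
  calc ((p:ℝ))^((1:ℤ)-((p^(M+i+1):ℕ):ℤ)) ≤ ((p:ℝ))^(-(M:ℤ)) := zpow_mono (by omega)
    _ = ((p:ℝ)⁻¹)^M := by
        rw [inv_pow, ← zpow_natCast (p:ℝ), ← zpow_neg]

lemma norm_coeff_PP_diff (i M k : ℕ) (hi1 : 1 ≤ i) :
    ‖PowerSeries.coeff (R := ℚ_[p]) k (PPser p i (M+1)) - PowerSeries.coeff (R := ℚ_[p]) k (PPser p i M)‖ ≤
      (p:ℝ)^(k:ℤ) * ((p:ℝ)⁻¹)^M := by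
  rw [← map_sub, PP_succ_sub]
  have hc := Cap.mul (nice_PP 0 i hi1 (Nat.zero_le p) M).1 (cap_F_sub_one i M)
  calc ‖PowerSeries.coeff (R := ℚ_[p]) k _‖ ≤ (1 * (p:ℝ)^((1:ℤ)-((p^(M+i+1):ℕ):ℤ))) * (p:ℝ)^(k:ℤ) :=
        hc k
    _ ≤ ((p:ℝ)⁻¹)^M * (p:ℝ)^(k:ℤ) := by
        apply mul_le_mul_of_nonneg_right _ (le_of_lt (zpow_pos' _))
        rw [one_mul]
        exact eps_le i M
    _ = (p:ℝ)^(k:ℤ) * ((p:ℝ)⁻¹)^M := by ring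

lemma coeff_PP_cauchy (i k : ℕ) (hi1 : 1 ≤ i) :
    CauchySeq (fun M => PowerSeries.coeff (R := ℚ_[p]) k (PPser p i M)) := by
  apply cauchySeq_of_le_geometric ((p:ℝ)⁻¹) ((p:ℝ)^(k:ℤ)) (by
    rw [inv_lt_one₀ ppos]; exact p1R)
  intro M
  rw [dist_eq_norm, norm_sub_rev]
  exact norm_coeff_PP_diff i M k hi1

lemma coeff_PP_tendsto (i k : ℕ) (hi1 : 1 ≤ i) :
    Tendsto (fun M => PowerSeries.coeff (R := ℚ_[p]) k (PPser p i M)) atTop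
      (𝓝 (PowerSeries.coeff (R := ℚ_[p]) k (Lser p i))) := by
  simp only [Lser, PowerSeries.coeff_mk]
  exact (coeff_PP_cauchy i k hi1).tendsto_limUnder

lemma coeff_L_tail (i k M : ℕ) (hi1 : 1 ≤ i) :
    ‖PowerSeries.coeff (R := ℚ_[p]) k (Lser p i) - PowerSeries.coeff (R := ℚ_[p]) k (PPser p i M)‖ ≤
      2 * ((p:ℝ)^(k:ℤ) * ((p:ℝ)⁻¹)^M) := by
  have hd := dist_le_of_le_geometric_of_tendsto ((p:ℝ)⁻¹) ((p:ℝ)^(k:ℤ))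
    (by rw [inv_lt_one₀ ppos]; exact p1R)
    (fun M => by
      rw [dist_eq_norm, norm_sub_rev]
      exact norm_coeff_PP_diff i M k hi1)
    (coeff_PP_tendsto i k hi1) M
  rw [dist_eq_norm, norm_sub_rev] at hd
  apply le_trans hd
  rw [div_le_iff₀ (by
    have : (p:ℝ)⁻¹ ≤ 1/2 := by
      rw [inv_le_comm₀ ppos (by norm_num)]
      norm_num
      exact_mod_cast hp.out.two_le
    linarith)]
  have h1 : (1:ℝ) - (p:ℝ)⁻¹ ≥ 1/2 := by
    have : (p:ℝ)⁻¹ ≤ 1/2 := by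
      rw [inv_le_comm₀ ppos (by norm_num)]
      norm_num
      exact_mod_cast hp.out.two_le
    linarith
  have h2 : (0:ℝ) ≤ (p:ℝ)^(k:ℤ) * ((p:ℝ)⁻¹)^M := by positivity
  nlinarith

lemma nice_L (g i : ℕ) (hi1 : 1 ≤ i) (hgp : g ≤ p) : Nice p g (Lser p i) 1 := by
  constructor
  · intro k
    apply le_of_tendsto (coeff_PP_tendsto i k hi1).norm
    exact Eventually.of_forall fun M => (nice_PP g i hi1 hgp M).1 k
  · intro k hk1 hk2
    apply le_of_tendsto (coeff_PP_tendsto i k hi1).norm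
    exact Eventually.of_forall fun M => (nice_PP g i hi1 hgp M).2 k hk1 hk2

/-! ### Chunk 5: evaluation of `Lser` and the infinite product -/

lemma norm_one_sub_le {x : ℚ_[p]} (hx : ‖x‖ ≤ 1) : ‖1 - x‖ ≤ 1 := by
  calc ‖1 - x‖ ≤ max ‖(1:ℚ_[p])‖ ‖-x‖ := by
        simpa [sub_eq_add_neg] using Padic.nonarchimedean (1:ℚ_[p]) (-x)
    _ ≤ 1 := by
        apply max_le (by simp)
        rwa [norm_neg]

lemma ev_PP_eq (i M : ℕ) (hi1 : 1 ≤ i) (ht : ‖t‖ ≤ (p:ℝ)^(-2:ℤ)) :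
    ev (PPser p i M) t =
      ∏ n ∈ Finset.range M, (1 - ((p:ℚ_[p]))⁻¹ * (t + (p:ℚ_[p]))^(p^(n+i+1))) := by
  rw [PPser, ev_prod (g := 0) (Finset.range M) _ (fun _ => 1)
    (fun n _ => nice_F 0 i hi1 (Nat.zero_le p) n) ht]
  apply Finset.prod_congr rfl
  intro n _
  rw [ev_coe, Fpoly]
  simp [Polynomial.eval_pow]

lemma ev_L_tendsto (i : ℕ) (hi1 : 1 ≤ i) (ht : ‖t‖ ≤ (p:ℝ)^(-2:ℤ)) :
    Tendsto (fun M => ev (PPser p i M) t) atTop (𝓝 (ev (Lser p i) t)) := by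
  have hub : ∀ M, ‖ev (PPser p i M) t - ev (Lser p i) t‖ ≤ 2 * ((p:ℝ)⁻¹)^M := by
    intro M
    have hcap : Cap p (PPser p i M - Lser p i) (2 * ((p:ℝ)⁻¹)^M) := by
      intro k
      rw [map_sub, norm_sub_rev]
      calc ‖PowerSeries.coeff (R := ℚ_[p]) k (Lser p i) - PowerSeries.coeff (R := ℚ_[p]) k (PPser p i M)‖
          ≤ 2 * ((p:ℝ)^(k:ℤ) * ((p:ℝ)⁻¹)^M) := coeff_L_tail i k M hi1
        _ = 2 * ((p:ℝ)⁻¹)^M * (p:ℝ)^(k:ℤ) := by ring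
    rw [← ev_sub (nice_PP 0 i hi1 (Nat.zero_le p) M).1 (nice_L 0 i hi1 (Nat.zero_le p)).1 ht]
    exact ev_norm_le hcap ht
  rw [tendsto_iff_norm_sub_tendsto_zero]
  apply squeeze_zero (fun M => norm_nonneg _) hub
  have : Tendsto (fun M : ℕ => ((p:ℝ)⁻¹)^M) atTop (𝓝 0) := by
    apply tendsto_pow_atTop_nhds_zero_of_lt_one (by positivity)
    rw [inv_lt_one₀ ppos]
    exact p1R
  simpa using this.const_mul 2

lemma norm_u_le (ht : ‖t‖ ≤ (p:ℝ)^(-2:ℤ)) : ‖t + (p:ℚ_[p])‖ ≤ (p:ℝ)⁻¹ := by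
  calc ‖t + (p:ℚ_[p])‖ ≤ max ‖t‖ ‖(p:ℚ_[p])‖ := Padic.nonarchimedean t _
    _ ≤ (p:ℝ)⁻¹ := by
        apply max_le
        · apply le_trans ht
          rw [← zpow_neg_one]
          exact zpow_mono (by omega)
        · rw [Padic.norm_p]

lemma norm_factor_sub_one (i n : ℕ) (ht : ‖t‖ ≤ (p:ℝ)^(-2:ℤ)) :
    ‖(1 - ((p:ℚ_[p]))⁻¹ * (t + (p:ℚ_[p]))^(p^(n+i+1))) - 1‖ ≤ ((p:ℝ)⁻¹)^n := by
  have hN : 1 ≤ p^(n+i+1) := Nat.one_le_pow _ _ hp.out.pos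
  calc ‖(1 - ((p:ℚ_[p]))⁻¹ * (t + (p:ℚ_[p]))^(p^(n+i+1))) - 1‖
      = ‖((p:ℚ_[p]))⁻¹ * (t + (p:ℚ_[p]))^(p^(n+i+1))‖ := by
        rw [show (1 - ((p:ℚ_[p]))⁻¹ * (t + (p:ℚ_[p]))^(p^(n+i+1))) - 1
          = -(((p:ℚ_[p]))⁻¹ * (t + (p:ℚ_[p]))^(p^(n+i+1))) by ring, norm_neg]
    _ = (p:ℝ) * ‖t + (p:ℚ_[p])‖^(p^(n+i+1)) := by
        rw [norm_mul, norm_inv, Padic.norm_p, inv_inv, norm_pow]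
    _ ≤ (p:ℝ) * ((p:ℝ)⁻¹)^(p^(n+i+1)) := by
        apply mul_le_mul_of_nonneg_left _ (le_of_lt ppos)
        exact pow_le_pow_left₀ (norm_nonneg _) (norm_u_le ht) _
    _ = (p:ℝ)^((1:ℤ)-((p^(n+i+1):ℕ):ℤ)) := by
        rw [inv_pow, ← zpow_natCast (p:ℝ), ← zpow_neg, mul_comm, ← zpow_add_one₀ (ne_of_gt ppos)]
        congr 1
        ring
    _ ≤ ((p:ℝ)⁻¹)^n := eps_le i n

lemma prod_sub_one_le (s : Finset ℕ) (f : ℕ → ℚ_[p]) (δ : ℝ) (h0 : 0 ≤ δ) (hδ : δ ≤ 1)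
    (hf : ∀ n ∈ s, ‖f n - 1‖ ≤ δ) : ‖(∏ n ∈ s, f n) - 1‖ ≤ δ := by
  induction s using Finset.cons_induction with
  | empty => simpa using h0
  | cons a s ha ih =>
    have hP : ‖(∏ n ∈ s, f n) - 1‖ ≤ δ := ih (fun n hn => hf n (Finset.mem_cons_of_mem hn))
    have hPn : ‖∏ n ∈ s, f n‖ ≤ 1 := by
      calc ‖∏ n ∈ s, f n‖ = ‖((∏ n ∈ s, f n) - 1) + 1‖ := by ring_nf
        _ ≤ max ‖(∏ n ∈ s, f n) - 1‖ ‖(1:ℚ_[p])‖ := Padic.nonarchimedean _ _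
        _ ≤ 1 := max_le (le_trans hP hδ) (by simp)
    rw [Finset.prod_cons]
    have hsplit : f a * (∏ n ∈ s, f n) - 1 =
        (f a - 1) * (∏ n ∈ s, f n) + ((∏ n ∈ s, f n) - 1) := by ring
    rw [hsplit]
    calc ‖(f a - 1) * (∏ n ∈ s, f n) + ((∏ n ∈ s, f n) - 1)‖
        ≤ max ‖(f a - 1) * (∏ n ∈ s, f n)‖ ‖(∏ n ∈ s, f n) - 1‖ :=
          Padic.nonarchimedean _ _
      _ ≤ δ := by
          apply max_le _ hP
          rw [norm_mul]
          calc ‖f a - 1‖ * ‖∏ n ∈ s, f n‖ ≤ δ * 1 :=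
              mul_le_mul (hf a (Finset.mem_cons_self a s)) hPn (norm_nonneg _) h0
            _ = δ := mul_one δ

lemma hasProd_factors (i : ℕ) (hi1 : 1 ≤ i) (ht : ‖t‖ ≤ (p:ℝ)^(-2:ℤ)) :
    HasProd (fun n => 1 - ((p:ℚ_[p]))⁻¹ * (t + (p:ℚ_[p]))^(p^(n+i+1))) (ev (Lser p i) t) := by
  set f : ℕ → ℚ_[p] := fun n => 1 - ((p:ℚ_[p]))⁻¹ * (t + (p:ℚ_[p]))^(p^(n+i+1)) with hf
  set a : ℚ_[p] := ev (Lser p i) t with ha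
  rw [HasProd, SummationFilter.unconditional_filter]
  rw [Metric.tendsto_atTop]
  intro ε hε
  obtain ⟨M₀, hM₀⟩ := Metric.tendsto_atTop.mp (ev_L_tendsto i hi1 ht) ε hε
  obtain ⟨M₁, hM₁⟩ := exists_pow_lt_of_lt_one hε (by
    rw [inv_lt_one₀ ppos]; exact p1R : (p:ℝ)⁻¹ < 1)
  set M := max M₀ M₁ with hM
  refine ⟨Finset.range M, fun s hs => ?_⟩
  have hinv1 : ((p:ℝ)⁻¹) ≤ 1 := by
    rw [inv_le_one₀ ppos]
    exact le_of_lt p1R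
  have hδ0 : (0:ℝ) ≤ ((p:ℝ)⁻¹)^M₁ := by positivity
  have hδ1 : ((p:ℝ)⁻¹)^M₁ ≤ 1 := pow_le_one₀ (by positivity) hinv1
  have htail : ‖(∏ n ∈ s \ Finset.range M, f n) - 1‖ ≤ ((p:ℝ)⁻¹)^M₁ := by
    apply prod_sub_one_le _ _ _ hδ0 hδ1
    intro n hn
    rw [Finset.mem_sdiff, Finset.mem_range, not_lt] at hn
    have hnM : M₁ ≤ n := le_trans (le_max_right M₀ M₁) hn.2
    calc ‖f n - 1‖ ≤ ((p:ℝ)⁻¹)^n := norm_factor_sub_one i n ht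
      _ ≤ ((p:ℝ)⁻¹)^M₁ := pow_le_pow_of_le_one (by positivity) hinv1 hnM
  have hhead : ‖∏ n ∈ Finset.range M, f n‖ ≤ 1 := by
    rw [norm_prod]
    apply Finset.prod_le_one (fun n _ => norm_nonneg _)
    intro n _
    apply norm_one_sub_le
    calc ‖((p:ℚ_[p]))⁻¹ * (t + (p:ℚ_[p]))^(p^(n+i+1))‖
        = ‖(1 - ((p:ℚ_[p]))⁻¹ * (t + (p:ℚ_[p]))^(p^(n+i+1))) - 1‖ := by
          rw [show (1 - ((p:ℚ_[p]))⁻¹ * (t + (p:ℚ_[p]))^(p^(n+i+1))) - 1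
            = -(((p:ℚ_[p]))⁻¹ * (t + (p:ℚ_[p]))^(p^(n+i+1))) by ring, norm_neg]
      _ ≤ ((p:ℝ)⁻¹)^n := norm_factor_sub_one i n ht
      _ ≤ 1 := pow_le_one₀ (by positivity) hinv1
  have hsplit : ∏ n ∈ s, f n = (∏ n ∈ Finset.range M, f n) * ∏ n ∈ s \ Finset.range M, f n := by
    rw [mul_comm, Finset.prod_sdiff hs]
  have hd1 : dist (∏ n ∈ s, f n) (∏ n ∈ Finset.range M, f n) < ε := by
    rw [dist_eq_norm, hsplit]
    calc ‖(∏ n ∈ Finset.range M, f n) * (∏ n ∈ s \ Finset.range M, f n) -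
          ∏ n ∈ Finset.range M, f n‖
        = ‖∏ n ∈ Finset.range M, f n‖ * ‖(∏ n ∈ s \ Finset.range M, f n) - 1‖ := by
          rw [← norm_mul]
          congr 1
          ring
      _ ≤ 1 * ((p:ℝ)⁻¹)^M₁ := mul_le_mul hhead htail (norm_nonneg _) (by norm_num)
      _ < ε := by rwa [one_mul]
  have hd2 : dist (∏ n ∈ Finset.range M, f n) a < ε := by
    have := hM₀ M (le_max_left M₀ M₁)
    rwa [← ev_PP_eq i M hi1 ht]
  calc dist (∏ n ∈ s, f n) a
      ≤ max (dist (∏ n ∈ s, f n) (∏ n ∈ Finset.range M, f n))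
          (dist (∏ n ∈ Finset.range M, f n) a) :=
        IsUltrametricDist.dist_triangle_max _ _ _
    _ < ε := max_lt hd1 hd2

/-! ### Chunk 6: assembly -/

/-- the full power series of `z_i` at `u = p` (in the variable `t = u - p`) -/
noncomputable def Zser (p : ℕ) [Fact p.Prime] (h i : ℕ) : PowerSeries ℚ_[p] :=
  Aser p i * (Lser p i * (Gser p h i)⁻¹)

lemma ev_A (i : ℕ) : ev (Aser p i) t = -(((p:ℚ_[p]))⁻¹ * (t + (p:ℚ_[p]))^(p^i)) := by
  rw [Aser, ev_neg, ev_C_mul, ev_coe]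
  simp [Polynomial.eval_pow]

lemma ev_GF (j : ℕ) : ev (GFser p j) t = (t + (p:ℚ_[p]))^(p^j) - (p:ℚ_[p]) := by
  rw [show GFser p j = ((((Polynomial.X + Polynomial.C ((p:ℚ_[p])))^(p^j) -
      Polynomial.C ((p:ℚ_[p]))) : Polynomial ℚ_[p]) : PowerSeries ℚ_[p]) from by
    rw [Polynomial.coe_sub, Polynomial.coe_C]
    rfl]
  rw [ev_coe]
  simp [Polynomial.eval_pow]

lemma ev_G (h i : ℕ) (ht : ‖t‖ ≤ (p:ℝ)^(-2:ℤ)) :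
    ev (Gser p h i) t = ∏ j ∈ Finset.Icc 1 i, ((t + (p:ℚ_[p]))^(p^j) - (p:ℚ_[p]))^(h-1) := by
  rw [Gser, ev_prod (g := 0) _ _ (fun _j => ((p:ℝ)^(-1:ℤ))^(h-1))
    (fun j hj => (nice_GF 0 j (Finset.mem_Icc.mp hj).1 (Nat.zero_le p)).pow (h-1)) ht]
  apply Finset.prod_congr rfl
  intro j hj
  rw [ev_pow (nice_GF 0 j (Finset.mem_Icc.mp hj).1 (Nat.zero_le p)) ht, ev_GF]

lemma ev_G_mul_Ginv (h i : ℕ) (ht : ‖t‖ ≤ (p:ℝ)^(-2:ℤ)) :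
    ev (Gser p h i) t * ev (Gser p h i)⁻¹ t = 1 := by
  rw [← ev_mul (nice_G 0 h i (Nat.zero_le p)).1 (nice_Ginv 0 h i (Nat.zero_le p)).1 ht,
    PowerSeries.mul_inv_cancel _ (G_zero_ne h i), ev_one ht]

lemma ev_Z_eq (h i : ℕ) (hi1 : 1 ≤ i) (ht : ‖t‖ ≤ (p:ℝ)^(-2:ℤ)) :
    ev (Zser p h i) t = zI p h i ((p:ℚ_[p]) + t) := by
  have hπ : ((p:ℚ_[p])) ≠ 0 := Nat.cast_ne_zero.mpr hp.out.ne_zero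
  have hGG := ev_G_mul_Ginv (t := t) h i ht
  have hGne : ev (Gser p h i) t ≠ 0 := left_ne_zero_of_mul_eq_one hGG
  have hGinv_eq : ev (Gser p h i)⁻¹ t = (ev (Gser p h i) t)⁻¹ :=
    (inv_eq_of_mul_eq_one_right hGG).symm
  have hmul : ev (Zser p h i) t = ev (Aser p i) t * (ev (Lser p i) t * ev (Gser p h i)⁻¹ t) := by
    rw [Zser, ev_mul (nice_A 0 i hi1 (Nat.zero_le i)).1
      ((nice_L 0 i hi1 (Nat.zero_le p)).mul (nice_Ginv 0 h i (Nat.zero_le p))).1 ht,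
      ev_mul (nice_L 0 i hi1 (Nat.zero_le p)).1 (nice_Ginv 0 h i (Nat.zero_le p)).1 ht]
  have hL : ev (Lser p i) t =
      ∏' n : ℕ, (1 - ((p:ℚ_[p]) + t) ^ (p ^ (n + i + 1)) / (p:ℚ_[p])) := by
    rw [show ∏' n : ℕ, (1 - ((p:ℚ_[p]) + t) ^ (p ^ (n + i + 1)) / (p:ℚ_[p]))
        = ∏' n : ℕ, (1 - ((p:ℚ_[p]))⁻¹ * (t + (p:ℚ_[p]))^(p^(n+i+1))) from
      tprod_congr fun n => by rw [add_comm t ((p:ℚ_[p])), div_eq_mul_inv]; ring]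
    exact ((hasProd_factors i hi1 ht).tprod_eq).symm
  rw [hmul, ev_A, hL, hGinv_eq, ev_G h i ht, zI]
  rw [show ((p:ℚ_[p]) + t) = t + (p:ℚ_[p]) from add_comm _ _]
  rw [ev_G h i ht] at hGne
  field_simp

/-- the coefficient bound constant -/
lemma nice_Z (h i : ℕ) (hi1 : 1 ≤ i) :
    Nice p (min i p) (Zser p h i)
      ((p:ℝ)^((1:ℤ) - ((p^i:ℕ):ℤ) + ((i*(h-1):ℕ):ℤ))) := by
  have hN := (nice_A (min i p) i hi1 (min_le_left i p)).mul
    ((nice_L (min i p) i hi1 (min_le_right i p)).mul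
      (nice_Ginv (min i p) h i (min_le_right i p)))
  rw [Zser]
  apply hN.mono
  rw [one_mul, ← zpow_add₀ (ne_of_gt ppos)]

lemma norm_smul_nat_le (n : ℕ) (x : ℚ_[p]) : ‖n • x‖ ≤ ‖x‖ := by
  rw [nsmul_eq_mul, norm_mul]
  calc ‖((n:ℕ):ℚ_[p])‖ * ‖x‖ ≤ 1 * ‖x‖ :=
      mul_le_mul_of_nonneg_right (norm_nat_le_one' n) (norm_nonneg _)
    _ = ‖x‖ := one_mul _

/-- the power series expansion of `zI` on the ball of radius `1/p` around `p`. -/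
lemma hasFPS (h i : ℕ) (hi1 : 1 ≤ i) :
    HasFPowerSeriesOnBall (zI p h i)
      (FormalMultilinearSeries.ofScalars ℚ_[p]
        (fun k => PowerSeries.coeff (R := ℚ_[p]) k (Zser p h i)))
      ((p:ℚ_[p])) (((p:NNReal))⁻¹ : NNReal) := by
  have hcap := (nice_Z (p := p) h i hi1).1
  constructor
  · apply FormalMultilinearSeries.le_radius_of_bound _
      ((p:ℝ)^((1:ℤ) - ((p^i:ℕ):ℤ) + ((i*(h-1):ℕ):ℤ)))
    intro n
    rw [FormalMultilinearSeries.ofScalars_norm]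
    have hco : ((((p:NNReal))⁻¹ : NNReal) : ℝ) = ((p:ℝ))⁻¹ := by
      rw [NNReal.coe_inv, NNReal.coe_natCast]
    rw [hco]
    calc ‖PowerSeries.coeff (R := ℚ_[p]) n (Zser p h i)‖ * ((p:ℝ)⁻¹)^n
        ≤ ((p:ℝ)^((1:ℤ) - ((p^i:ℕ):ℤ) + ((i*(h-1):ℕ):ℤ)) * (p:ℝ)^(n:ℤ)) * ((p:ℝ)⁻¹)^n :=
          mul_le_mul_of_nonneg_right (hcap n) (by positivity)
      _ = (p:ℝ)^((1:ℤ) - ((p^i:ℕ):ℤ) + ((i*(h-1):ℕ):ℤ)) := by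
          rw [mul_assoc, inv_pow, ← zpow_natCast (p:ℝ), ← zpow_neg,
            ← zpow_add₀ (ne_of_gt ppos)]
          simp
  · rw [ENNReal.coe_pos]
    rw [pos_iff_ne_zero]
    simp [hp.out.ne_zero]
  · intro y hy
    have hy1 : ‖y‖ < ((p:ℝ))⁻¹ := by
      rw [EMetric.mem_ball, edist_zero_right] at hy
      have := ENNReal.coe_lt_coe.mp hy
      calc ‖y‖ = (‖y‖₊ : ℝ) := rfl
        _ < ((((p:NNReal))⁻¹ : NNReal) : ℝ) := by exact_mod_cast this
        _ = ((p:ℝ))⁻¹ := by rw [NNReal.coe_inv, NNReal.coe_natCast]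
    have hy2 : ‖y‖ ≤ (p:ℝ)^(-2:ℤ) := by
      rcases eq_or_ne y 0 with rfl | hy0
      · rw [norm_zero]
        positivity
      · rw [Padic.norm_eq_zpow_neg_valuation hy0] at hy1 ⊢
        rw [← zpow_neg_one] at hy1
        have hval : -y.valuation < -1 := (zpow_lt_zpow_iff_right₀ p1R).mp hy1
        exact zpow_mono (by omega)
    have hsum := (cap_summable hcap hy2).hasSum
    have hev : ev (Zser p h i) y = zI p h i ((p:ℚ_[p]) + y) := ev_Z_eq h i hi1 hy2
    rw [ev] at hev
    rw [hev] at hsum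
    have hfe : (fun k => (FormalMultilinearSeries.ofScalars ℚ_[p]
        (fun k => PowerSeries.coeff (R := ℚ_[p]) k (Zser p h i)) k) fun _ => y) =
        fun k => PowerSeries.coeff (R := ℚ_[p]) k (Zser p h i) * y^k :=
      funext fun k => by rw [FormalMultilinearSeries.ofScalars_apply_eq, smul_eq_mul]
    rw [hfe]
    exact hsum

theorem stmt6_main (h i : ℕ) (hh : 1 ≤ h) (hi : 1 ≤ i) :
    ‖zI p h i ((p:ℚ_[p]))‖ ≤
      (p : ℝ) ^ (-(((p : ℤ) ^ i - (i : ℤ) * ((h : ℤ) - 1) - 1))) ∧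
    ∀ n : ℕ, 0 < n → (n : ℤ) < (p : ℤ) - 1 →
      ‖iteratedDeriv n (zI p h i) ((p:ℚ_[p]))‖ ≤
        (p : ℝ) ^ (-(((p : ℤ) ^ i + min (i : ℤ) (p : ℤ) - (n : ℤ)
          - (i : ℤ) * ((h : ℤ) - 1) - 1))) := by
  have hZ := nice_Z (p := p) h i hi
  have hexp1 : -(((p : ℤ) ^ i - (i : ℤ) * ((h : ℤ) - 1) - 1)) =
      (1:ℤ) - ((p^i:ℕ):ℤ) + ((i*(h-1):ℕ):ℤ) := by
    have h1 : ((p^i:ℕ):ℤ) = (p:ℤ)^i := by push_cast; ring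
    have h2 : ((i*(h-1):ℕ):ℤ) = (i:ℤ) * ((h:ℤ) - 1) := by
      have : ((h-1:ℕ):ℤ) = (h:ℤ) - 1 := by omega
      push_cast [this]
      ring
    omega
  constructor
  · have hzeq : zI p h i ((p:ℚ_[p])) = PowerSeries.coeff (R := ℚ_[p]) 0 (Zser p h i) := by
      have := ev_Z_eq (p := p) (t := 0) h i hi (by rw [norm_zero]; positivity)
      rw [add_zero] at this
      rw [← this, ev_zero_pt]
    rw [hzeq, hexp1]
    have := hZ.1 0
    simpa using this
  · intro n hn0 hnp
    have hn2 : n ≤ p - 2 := by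
      have hnp' : n + 1 < p := by exact_mod_cast (by omega : (n:ℤ) + 1 < (p:ℤ))
      omega
    have hB := hasFPS (p := p) h i hi
    have hfs := hB.factorial_smul 1 n
    rw [iteratedDeriv_eq_iteratedFDeriv, ← hfs]
    calc ‖n.factorial • (FormalMultilinearSeries.ofScalars ℚ_[p]
          (fun k => PowerSeries.coeff (R := ℚ_[p]) k (Zser p h i)) n fun _ => (1:ℚ_[p]))‖
        ≤ ‖(FormalMultilinearSeries.ofScalars ℚ_[p]
            (fun k => PowerSeries.coeff (R := ℚ_[p]) k (Zser p h i)) n fun _ => (1:ℚ_[p]))‖ :=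
          norm_smul_nat_le _ _
      _ = ‖PowerSeries.coeff (R := ℚ_[p]) n (Zser p h i)‖ := by
          rw [FormalMultilinearSeries.ofScalars_apply_eq]
          simp
      _ ≤ (p:ℝ)^((1:ℤ) - ((p^i:ℕ):ℤ) + ((i*(h-1):ℕ):ℤ)) * (p:ℝ)^((n:ℤ) - ((min i p:ℕ):ℤ)) :=
          hZ.2 n hn0 hn2
      _ = (p : ℝ) ^ (-(((p : ℤ) ^ i + min (i : ℤ) (p : ℤ) - (n : ℤ)
            - (i : ℤ) * ((h : ℤ) - 1) - 1))) := by
          rw [← zpow_add₀ (ne_of_gt ppos)]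
          congr 1
          have h1 : ((p^i:ℕ):ℤ) = (p:ℤ)^i := by push_cast; ring
          have h2 : ((i*(h-1):ℕ):ℤ) = (i:ℤ) * ((h:ℤ) - 1) := by
            have : ((h-1:ℕ):ℤ) = (h:ℤ) - 1 := by omega
            push_cast [this]
            ring
          have h3 : ((min i p:ℕ):ℤ) = min (i:ℤ) (p:ℤ) := by
            rw [Nat.cast_min]
          omega

end Main
end Stmt6Aux

/-- for `i ≥ 1`, `v_p(z_i|_{u=p}) ≥ p^i - i(h-1) - 1`, and for
`0 < n < p - 1`, `v_p((d^n z_i/du^n)|_{u=p}) ≥ p^i + min(i,p) - n - i(h-1) - 1`;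
stated via the `p`-adic norm (`v_p(x) ≥ k` iff `‖x‖ ≤ p^{-k}`). -/
theorem stmt6 (p : ℕ) [Fact p.Prime] (h i : ℕ) (hh : 1 ≤ h) (hi : 1 ≤ i) :
    ‖zI p h i (p : ℚ_[p])‖ ≤
      (p : ℝ) ^ (-(((p : ℤ) ^ i - (i : ℤ) * ((h : ℤ) - 1) - 1))) ∧
    ∀ n : ℕ, 0 < n → (n : ℤ) < (p : ℤ) - 1 →
      ‖iteratedDeriv n (zI p h i) (p : ℚ_[p])‖ ≤
        (p : ℝ) ^ (-(((p : ℤ) ^ i + min (i : ℤ) (p : ℤ) - (n : ℤ)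
          - (i : ℤ) * ((h : ℤ) - 1) - 1))) :=
  Stmt6Aux.stmt6_main h i hh hi
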